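/- Let X be a metric space and θ : X → ℝ/ℤ a continuous map such that for every nonempty open set U ⊆ X, the image θ(U) contains a nonempty open subset of ℝ/ℤ. Define g : X × ℝ/ℤ → X × ℝ/ℤ by g(x, α) = (x, α + θ(x)). Then for every δ ∈ (0, 1/2), the dynamical system (X × ℝ/ℤ, g) has δ-sensitiveness to initial conditions: for every point M ∈ X × ℝ/ℤ and every neighborhood W of M, there exists M′ ∈ W such that dist(gⁿ(M), gⁿ(M′)) ≥ δ for infinitely many integers n, where X × ℝ/ℤ carries the ℓ¹ product metric dist((x,α),(x′,α′)) = d_X(x,x′) + ‖α − α′‖, with ‖·‖ the natural quotient distance on ℝ/ℤ. -/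

import Mathlib

open Set

/-- if `θ : X → ℝ/ℤ` is continuous and the image of every nonempty open
set contains a nonempty open set, then the skew map `g(x,α) = (x, α + θ(x))` on
`X × ℝ/ℤ` has `δ`-sensitiveness to initial conditions for every `δ ∈ (0,1/2)`, with
respect to the `ℓ¹` product distance `d_X(x,x') + ‖α − α'‖`. -/
theorem stmt_18 {X : Type*} [MetricSpace X]
    (θ : X → UnitAddCircle) (hθ : Continuous θ)
    (himg : ∀ U : Set X, IsOpen U → U.Nonempty →
      ∃ V : Set UnitAddCircle, V.Nonempty ∧ IsOpen V ∧ V ⊆ θ '' U)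
    (δ : ℝ) (hδ : δ ∈ Set.Ioo (0 : ℝ) (1 / 2)) :
    ∀ M : X × UnitAddCircle, ∀ W ∈ nhds M,
      ∃ M' ∈ W, ∀ N : ℕ, ∃ n : ℕ, N ≤ n ∧
        δ ≤ dist ((fun p : X × UnitAddCircle => (p.1, p.2 + θ p.1))^[n] M).1
              ((fun p : X × UnitAddCircle => (p.1, p.2 + θ p.1))^[n] M').1 +
            dist ((fun p : X × UnitAddCircle => (p.1, p.2 + θ p.1))^[n] M).2
              ((fun p : X × UnitAddCircle => (p.1, p.2 + θ p.1))^[n] M').2 := by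
  obtain ⟨hδ0, hδ2⟩ := hδ
  have hiter : ∀ (n : ℕ) (p : X × UnitAddCircle),
      (fun p : X × UnitAddCircle => (p.1, p.2 + θ p.1))^[n] p = (p.1, p.2 + n • θ p.1) := by
    intro n
    induction n with
    | zero => intro p; simp
    | succ n ih =>
      intro p
      rw [Function.iterate_succ_apply', ih]
      simp only [succ_nsmul]
      rw [Prod.mk.injEq]
      exact ⟨rfl, by abel⟩
  intro M W hW
  obtain ⟨S, hS, T, hT, hST⟩ := mem_nhds_prod_iff.mp hW
  obtain ⟨U, hUS, hUopen, hxU⟩ := mem_nhds_iff.mp hS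
  obtain ⟨V, hVne, hVopen, hVim⟩ := himg U hUopen ⟨M.1, hxU⟩
  obtain ⟨v₀, hv₀⟩ := hVne
  obtain ⟨r, hr⟩ := QuotientAddGroup.mk_surjective v₀
  have hPopen : IsOpen ((fun x : ℝ => (x : UnitAddCircle)) ⁻¹' V) :=
    hVopen.preimage (AddCircle.continuous_mk' 1)
  have hrP : r ∈ (fun x : ℝ => (x : UnitAddCircle)) ⁻¹' V := by
    simp only [mem_preimage]; rw [hr]; exact hv₀
  obtain ⟨ε, hε, hball⟩ := Metric.isOpen_iff.mp hPopen r hrP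
  obtain ⟨c₀, hc₀⟩ := QuotientAddGroup.mk_surjective (θ M.1)
  obtain ⟨k, hk⟩ := exists_pow_lt_of_lt_one hε (by norm_num : (1:ℝ)/2 < 1)
  have h2k : (1:ℝ) < ε * 2 ^ k := by
    rw [div_pow, one_pow, div_lt_iff₀ (by positivity)] at hk
    linarith
  set K : ℝ := 2 ^ (k + 1) with hK
  have hKpos : (0:ℝ) < K := by positivity
  set u : ℝ := r - c₀ - ε with hu
  set m : ℤ := ⌊u * K⌋ + 1 with hm
  set s : ℤ := if Even m then m + 1 else m with hs
  have hsodd : Odd s := by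
    rcases Int.even_or_odd m with he | ho
    · rw [hs, if_pos he]; exact he.add_one
    · rw [hs, if_neg (Int.not_even_iff_odd.mpr ho)]; exact ho
  have hs_lb : u * K < (s : ℝ) := by
    have h1 : u * K < (m : ℝ) := by
      rw [hm]; push_cast; linarith [Int.lt_floor_add_one (u * K)]
    rcases le_or_gt (m : ℝ) (s : ℝ) with h | h
    · linarith
    · exfalso
      rw [hs] at h
      split_ifs at h <;> simp at h <;> linarith [h]
  have hs_ub : (s : ℝ) ≤ u * K + 2 := by
    have h1 : (m : ℝ) ≤ u * K + 1 := by
      rw [hm]; push_cast; linarith [Int.floor_le (u * K)]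
    rw [hs]; split_ifs <;> push_cast <;> linarith
  set β : ℝ := (s : ℝ) / K with hβ
  have hβ_mem : c₀ + β ∈ Metric.ball r ε := by
    rw [Metric.mem_ball, Real.dist_eq, abs_lt]
    have hβ1 : u < β := (lt_div_iff₀ hKpos).mpr (by linarith)
    have hβ2 : β < u + 2 * ε := by
      rw [div_lt_iff₀ hKpos]
      have : (2:ℝ) < 2 * ε * K := by
        rw [hK]; rw [pow_succ]
        nlinarith
      nlinarith
    constructor <;> simp only [hu] at hβ1 hβ2 <;> linarith
  have hv : ((c₀ + β : ℝ) : UnitAddCircle) ∈ V := hball hβ_mem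
  obtain ⟨x', hx'U, hx'θ⟩ := hVim hv
  refine ⟨(x', M.2), hST ⟨hUS hx'U, mem_of_mem_nhds hT⟩, ?_⟩
  intro N
  refine ⟨2 ^ k * (2 * N + 1), ?_, ?_⟩
  · calc N ≤ 2 * N + 1 := by omega
      _ ≤ 2 ^ k * (2 * N + 1) := Nat.le_mul_of_pos_left _ (Nat.pow_pos (by norm_num))
  · set n : ℕ := 2 ^ k * (2 * N + 1) with hn
    rw [hiter, hiter]
    simp only
    have hdist2 : dist (M.2 + n • θ M.1) (M.2 + n • θ x') = ‖(n : ℕ) • (θ M.1 - θ x')‖ := by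
      rw [dist_add_left, dist_eq_norm, ← smul_sub]
    obtain ⟨m₀, hm₀⟩ : Odd ((2 * (N:ℤ) + 1) * s) := Odd.mul ⟨N, by ring⟩ hsodd
    have hkey : (n : ℕ) • (θ M.1 - θ x') = -((1/2 : ℝ) : UnitAddCircle) := by
      have h1 : θ M.1 - θ x' = ((-β : ℝ) : UnitAddCircle) := by
        rw [← hc₀, hx'θ]
        have := (QuotientAddGroup.mk_sub (AddSubgroup.zmultiples (1:ℝ)) c₀ (c₀ + β)).symm
        rw [show c₀ - (c₀ + β) = -β by ring] at this
        exact this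
      have h2 : (n : ℕ) • ((-β : ℝ) : UnitAddCircle) = (((n : ℕ) • (-β) : ℝ) : UnitAddCircle) :=
        (QuotientAddGroup.mk_nsmul (AddSubgroup.zmultiples (1:ℝ)) (-β) n).symm
      have hreal : ((n : ℕ) • (-β) : ℝ) = -((m₀ : ℝ) + 1/2) := by
        have hcast : ((2 * (N:ℝ) + 1) * (s:ℝ)) = 2 * (m₀ : ℝ) + 1 := by
          exact_mod_cast congrArg (fun z : ℤ => (z : ℝ)) hm₀
        have h2kne : (2:ℝ) ^ k ≠ 0 := by positivity
        have hnb : ((n : ℕ) : ℝ) * β = ((2 * (N:ℝ) + 1) * (s:ℝ)) / 2 := by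
          rw [hβ, hK, pow_succ, hn]
          push_cast
          field_simp
        rw [nsmul_eq_mul, mul_neg, hnb, hcast]
        ring
      have h3 : ((-((m₀ : ℝ) + 1/2) : ℝ) : UnitAddCircle) = -((1/2 : ℝ) : UnitAddCircle) := by
        have hz : (((m₀ : ℝ)) : UnitAddCircle) = 0 :=
          (AddCircle.coe_eq_zero_iff (1:ℝ)).mpr ⟨m₀, by simp⟩
        have := QuotientAddGroup.mk_neg (AddSubgroup.zmultiples (1:ℝ)) ((m₀ : ℝ) + 1/2)
        rw [this, QuotientAddGroup.mk_add, hz, zero_add]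
      rw [h1, h2, hreal, h3]
    have hnorm : ‖(n : ℕ) • (θ M.1 - θ x')‖ = 1/2 := by
      have h12 : ‖((1/2 : ℝ) : UnitAddCircle)‖ = 1/2 := by
        have := AddCircle.norm_half_period_eq (p := (1:ℝ))
        simpa using this
      rw [hkey, norm_neg]
      exact h12
    rw [hdist2, hnorm]
    have : (0:ℝ) ≤ dist M.1 x' := dist_nonneg
    linarith
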